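/- arXiv:math/0209050 — 2 statements merged into one kernel-verified Lean document; each statement's English description precedes it below -/
import Mathlib

section
/- For every integer j ≥ 0 and every t > 0, q_j(t) = (1/t)·∫_0^t p_j(s) ds. -/
open MeasureTheory ProbabilityTheory Real

open MeasureTheory ProbabilityTheory Real

/-- Signless Stirling numbers of the first kind: coefficient of `x^j` in `x(x+1)⋯(x+k-1)`. -/
noncomputable def stirling1 (k j : ℕ) : ℝ :=
  (∏ i ∈ Finset.range k, (Polynomial.X + Polynomial.C (i : ℝ))).coeff j

/-- Stirling numbers of the second kind. -/
def stirling2 : ℕ → ℕ → ℕ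
  | 0, 0 => 1
  | 0, _ + 1 => 0
  | _ + 1, 0 => 0
  | n + 1, k + 1 => (k + 1) * stirling2 n (k + 1) + stirling2 n k

/-- `p_j(t) = e^{-t} Σ_{k≥j} (t^k/k!) σ₁(k,j)/k!` (terms with `k<j` vanish). -/
noncomputable def pfn (j : ℕ) (t : ℝ) : ℝ :=
  Real.exp (-t) * ∑' k : ℕ, t ^ k / (Nat.factorial k : ℝ) * (stirling1 k j / (Nat.factorial k : ℝ))

/-- `q_j(t) = e^{-t} Σ_{k≥0} (t^k/(k+1)!) Σ_{i=0}^k σ₁(i,j)/i!`. -/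
noncomputable def qfn (j : ℕ) (t : ℝ) : ℝ :=
  Real.exp (-t) * ∑' k : ℕ, t ^ k / (Nat.factorial (k + 1) : ℝ) *
    ∑ i ∈ Finset.range (k + 1), stirling1 i j / (Nat.factorial i : ℝ)

/-- `I(t,s) = ∫_s^t e^{-ξ}/ξ dξ`. -/
noncomputable def Ifun (t s : ℝ) : ℝ := ∫ ξ in s..t, Real.exp (-ξ) / ξ

/-- `I(s) = ∫_s^∞ e^{-ξ}/ξ dξ`. -/
noncomputable def Iinf (s : ℝ) : ℝ := ∫ ξ in Set.Ioi s, Real.exp (-ξ) / ξ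

/-- `I₂(t,s) = ∫_s^t e^{-ξ}/ξ² dξ`. -/
noncomputable def I2fun (t s : ℝ) : ℝ := ∫ ξ in s..t, Real.exp (-ξ) / ξ ^ 2

/-- `I₂(s) = ∫_s^∞ e^{-ξ}/ξ² dξ`. -/
noncomputable def I2inf (s : ℝ) : ℝ := ∫ ξ in Set.Ioi s, Real.exp (-ξ) / ξ ^ 2

/-- `J(t) = ∫_0^t (e^ξ - 1)/ξ dξ`. -/
noncomputable def Jfun (t : ℝ) : ℝ := ∫ ξ in (0:ℝ)..t, (Real.exp ξ - 1) / ξ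

open Polynomial in
lemma stirling1_bounds : ∀ (k j : ℕ), 0 ≤ stirling1 k j ∧ stirling1 k j ≤ (Nat.factorial k : ℝ) := by
  intro k
  induction k with
  | zero =>
    intro j
    simp only [stirling1, Finset.range_zero, Finset.prod_empty, Polynomial.coeff_one,
      Nat.factorial_zero, Nat.cast_one]
    split_ifs <;> norm_num
  | succ k ih =>
    have hP : (∏ i ∈ Finset.range (k+1), (X + C (i:ℝ)))
        = (∏ i ∈ Finset.range k, (X + C (i:ℝ))) * (X + C (k:ℝ)) := Finset.prod_range_succ _ _
    have hfac : ((k+1).factorial : ℝ) = ((k.factorial : ℝ)) * ((k:ℝ)+1) := by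
      rw [Nat.factorial_succ]; push_cast; ring
    intro j
    cases j with
    | zero =>
      have hval : stirling1 (k+1) 0 = stirling1 k 0 * (k:ℝ) := by
        unfold stirling1
        rw [hP, Polynomial.mul_coeff_zero]
        simp
      obtain ⟨h0, h1⟩ := ih 0
      constructor
      · rw [hval]; positivity
      · rw [hval, hfac]
        nlinarith [(Nat.cast_nonneg k : (0:ℝ) ≤ k), h0, h1]
    | succ j =>
      have hval : stirling1 (k+1) (j+1) = stirling1 k j + stirling1 k (j+1) * (k:ℝ) := by
        unfold stirling1
        rw [hP, mul_add, Polynomial.coeff_add, Polynomial.coeff_mul_X, Polynomial.coeff_mul_C]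
      obtain ⟨h0, h1⟩ := ih j
      obtain ⟨h0', h1'⟩ := ih (j+1)
      constructor
      · rw [hval]; positivity
      · rw [hval, hfac]
        nlinarith [(Nat.cast_nonneg k : (0:ℝ) ≤ k)]

lemma aux_summable_series (c : ℕ → ℝ) (hc : ∀ k, |c k| ≤ (k:ℝ)+1) (x : ℝ) :
    Summable (fun n => c n * x ^ n / (Nat.factorial n : ℝ)) := by
  apply Summable.of_norm_bounded (g := fun n => (2*|x|)^n / (Nat.factorial n : ℝ))
    (Real.summable_pow_div_factorial _)
  intro n
  have h2 : ((n:ℝ)+1) ≤ 2^n := by exact_mod_cast Nat.lt_two_pow_self (n := n)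
  have hn : ‖c n * x ^ n / (Nat.factorial n : ℝ)‖ = |c n| * |x|^n / (Nat.factorial n : ℝ) := by
    rw [norm_div, norm_mul, norm_pow, Real.norm_eq_abs, Real.norm_eq_abs, Real.norm_natCast]
  rw [hn, mul_pow]
  gcongr
  exact (hc n).trans h2

lemma aux_hasDerivAt_series (c : ℕ → ℝ) (hc : ∀ k, |c k| ≤ (k:ℝ)+1) (x : ℝ) :
    HasDerivAt (fun y : ℝ => ∑' n, c n * y ^ n / (Nat.factorial n : ℝ))
      (∑' n, c (n+1) * x ^ n / (Nat.factorial n : ℝ)) x := by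
  set R : ℝ := |x| + 1 with hRdef
  have hR1 : (1:ℝ) ≤ R := by rw [hRdef]; linarith [abs_nonneg x]
  have hR0 : (0:ℝ) < R := by positivity
  have hx : x ∈ Metric.ball (0:ℝ) R := by
    simp only [Metric.mem_ball, Real.dist_eq, sub_zero]
    linarith [abs_nonneg x]
  have hg : ∀ (n : ℕ) (y : ℝ), HasDerivAt (fun z : ℝ => c n * z ^ n / (Nat.factorial n : ℝ))
      (c n * ((n:ℝ) * y ^ (n-1)) / (Nat.factorial n : ℝ)) y := by
    intro n y
    exact ((hasDerivAt_pow n y).const_mul (c n)).div_const _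
  have hbound : ∀ (n : ℕ) (y : ℝ), y ∈ Metric.ball (0:ℝ) R →
      ‖c n * ((n:ℝ) * y ^ (n-1)) / (Nat.factorial n : ℝ)‖ ≤ (4*R)^n / (Nat.factorial n : ℝ) := by
    intro n y hy
    have hyR : |y| ≤ R := by
      have := hy
      simp only [Metric.mem_ball, Real.dist_eq, sub_zero] at this
      linarith
    have h2 : ((n:ℝ)+1) ≤ 2^n := by exact_mod_cast Nat.lt_two_pow_self (n := n)
    have h3 : (n:ℝ) ≤ 2^n := by linarith [h2, (by positivity : (0:ℝ) ≤ (n:ℝ))]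
    have h4 : |y|^(n-1) ≤ R^n :=
      le_trans (pow_le_pow_left₀ (abs_nonneg y) hyR _) (pow_le_pow_right₀ hR1 (Nat.sub_le n 1))
    have hnorm : ‖c n * ((n:ℝ) * y ^ (n-1)) / (Nat.factorial n : ℝ)‖
        = |c n| * ((n:ℝ) * |y| ^ (n-1)) / (Nat.factorial n : ℝ) := by
      rw [norm_div, norm_mul, norm_mul, norm_pow, Real.norm_eq_abs, Real.norm_eq_abs,
        Real.norm_eq_abs, Real.norm_natCast, Nat.abs_cast]
    rw [hnorm]
    have h44 : (4*R)^n = 2^n * (2^n * R^n) := by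
      rw [show (4:ℝ)*R = 2*(2*R) by ring, mul_pow, mul_pow]
    rw [h44]
    gcongr <;> first
      | exact (hc n).trans h2
      | exact h3
      | exact h4
  have hg0 : Summable (fun n => c n * (0:ℝ) ^ n / (Nat.factorial n : ℝ)) :=
    aux_summable_series c hc 0
  have H := hasDerivAt_tsum_of_isPreconnected (Real.summable_pow_div_factorial (4*R))
      Metric.isOpen_ball (convex_ball (0:ℝ) R).isPreconnected
      (fun n y _ => hg n y) hbound (Metric.mem_ball_self hR0) hg0 hx
  have hsum' : Summable (fun n => c n * ((n:ℝ) * x ^ (n-1)) / (Nat.factorial n : ℝ)) :=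
    Summable.of_norm_bounded (Real.summable_pow_div_factorial (4*R)) (fun n => hbound n x hx)
  have heq : (∑' n, c n * ((n:ℝ) * x ^ (n-1)) / (Nat.factorial n : ℝ))
      = ∑' n, c (n+1) * x ^ n / (Nat.factorial n : ℝ) := by
    rw [Summable.tsum_eq_zero_add hsum']
    simp only [Nat.cast_zero, zero_mul, mul_zero, zero_div, zero_add, Nat.add_sub_cancel]
    apply tsum_congr
    intro n
    have hfs : ((n+1).factorial : ℝ) = ((n:ℝ)+1) * (Nat.factorial n : ℝ) := by
      rw [Nat.factorial_succ]; push_cast; ring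
    rw [hfs]
    have h1 : ((n:ℝ)+1) ≠ 0 := by positivity
    have h2 : (Nat.factorial n : ℝ) ≠ 0 := by positivity
    push_cast
    field_simp
  rw [heq] at H
  exact H

lemma aux_continuous_series (c : ℕ → ℝ) (hc : ∀ k, |c k| ≤ (k:ℝ)+1) :
    Continuous (fun y : ℝ => ∑' n, c n * y ^ n / (Nat.factorial n : ℝ)) :=
  continuous_iff_continuousAt.2 fun x => (aux_hasDerivAt_series c hc x).continuousAt

noncomputable def auxca (j k : ℕ) : ℝ := stirling1 k j / (Nat.factorial k : ℝ)

noncomputable def auxcb (j k : ℕ) : ℝ := ∑ i ∈ Finset.range (k+1), auxca j i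

noncomputable def auxcq (j : ℕ) : ℕ → ℝ
  | 0 => 0
  | k+1 => auxcb j k

lemma auxca_nonneg (j k : ℕ) : 0 ≤ auxca j k := by
  have h1 := (stirling1_bounds k j).1
  have h2 : (0:ℝ) < (Nat.factorial k : ℝ) := by exact_mod_cast Nat.factorial_pos k
  rw [auxca]
  positivity

lemma auxca_le_one (j k : ℕ) : auxca j k ≤ 1 := by
  have h := (stirling1_bounds k j).2
  have hf : (0:ℝ) < (Nat.factorial k : ℝ) := by exact_mod_cast Nat.factorial_pos k
  rw [auxca, div_le_one hf]
  exact h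

lemma auxca_abs (j : ℕ) : ∀ k, |auxca j k| ≤ (k:ℝ)+1 := by
  intro k
  rw [abs_of_nonneg (auxca_nonneg j k)]
  have h : (0:ℝ) ≤ (k:ℝ) := Nat.cast_nonneg k
  linarith [auxca_le_one j k]

lemma auxcb_bounds (j k : ℕ) : 0 ≤ auxcb j k ∧ auxcb j k ≤ (k:ℝ)+1 := by
  constructor
  · exact Finset.sum_nonneg fun i _ => auxca_nonneg j i
  · calc auxcb j k ≤ ∑ i ∈ Finset.range (k+1), (1:ℝ) :=
          Finset.sum_le_sum fun i _ => auxca_le_one j i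
      _ = (k:ℝ)+1 := by simp

lemma auxcb_abs (j : ℕ) : ∀ n, |auxcb j n| ≤ (n:ℝ)+1 := by
  intro n
  obtain ⟨h0, h1⟩ := auxcb_bounds j n
  rw [abs_of_nonneg h0]; exact h1

lemma auxcq_abs (j : ℕ) : ∀ n, |auxcq j n| ≤ (n:ℝ)+1 := by
  intro n
  cases n with
  | zero => simp [auxcq]
  | succ k =>
    obtain ⟨h0, h1⟩ := auxcb_bounds j k
    rw [show auxcq j (k+1) = auxcb j k from rfl, abs_of_nonneg h0]
    push_cast
    linarith

lemma pfn_eq (j : ℕ) (t : ℝ) :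
    pfn j t = Real.exp (-t) * ∑' n, auxca j n * t ^ n / (Nat.factorial n : ℝ) := by
  rw [pfn]
  congr 1
  apply tsum_congr
  intro n
  rw [auxca]
  ring

noncomputable def auxG (j : ℕ) (t : ℝ) : ℝ :=
  Real.exp (-t) * ∑' n, auxcq j n * t ^ n / (Nat.factorial n : ℝ)

lemma auxG_hasDeriv (j : ℕ) (x : ℝ) : HasDerivAt (auxG j) (pfn j x) x := by
  have hE : HasDerivAt (fun t : ℝ => Real.exp (-t)) (Real.exp (-x) * (-1)) x :=
    (hasDerivAt_neg x).exp
  have hF := aux_hasDerivAt_series (auxcq j) (auxcq_abs j) x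
  have H := hE.mul hF
  have hsq : Summable (fun n => auxcq j n * x ^ n / (Nat.factorial n : ℝ)) :=
    aux_summable_series _ (auxcq_abs j) x
  have hsb : Summable (fun n => auxcb j n * x ^ n / (Nat.factorial n : ℝ)) :=
    aux_summable_series _ (auxcb_abs j) x
  have hsa : Summable (fun n => auxca j n * x ^ n / (Nat.factorial n : ℝ)) :=
    aux_summable_series _ (auxca_abs j) x
  have hdiff : (∑' n, auxcq j (n+1) * x ^ n / (Nat.factorial n : ℝ))
      - (∑' n, auxcq j n * x ^ n / (Nat.factorial n : ℝ))
      = ∑' n, auxca j n * x ^ n / (Nat.factorial n : ℝ) := by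
    have hsb1 : Summable (fun n => auxcb j n * x ^ n / (Nat.factorial n : ℝ))
        ↔ True := iff_of_true hsb trivial
    have hrw : (∑' n, auxcq j (n+1) * x ^ n / (Nat.factorial n : ℝ))
        = ∑' n, auxcb j n * x ^ n / (Nat.factorial n : ℝ) := rfl
    rw [hrw, Summable.tsum_eq_zero_add hsq, Summable.tsum_eq_zero_add hsb, Summable.tsum_eq_zero_add hsa]
    simp only [auxcq, zero_mul, zero_div, zero_add, pow_zero, Nat.factorial_zero,
      Nat.cast_one, mul_one, div_one]
    have hsb' : Summable (fun n => auxcb j (n+1) * x ^ (n+1) / (Nat.factorial (n+1) : ℝ)) :=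
      (summable_nat_add_iff 1).2 hsb
    have hsq' : Summable (fun n => auxcb j n * x ^ (n+1) / (Nat.factorial (n+1) : ℝ)) := by
      have h := (summable_nat_add_iff 1).2 hsq
      simpa only [show ∀ n, auxcq j (n+1) = auxcb j n from fun _ => rfl] using h
    have hT : (∑' n, auxcb j (n+1) * x ^ (n+1) / (Nat.factorial (n+1) : ℝ))
        - (∑' n, auxcb j n * x ^ (n+1) / (Nat.factorial (n+1) : ℝ))
        = ∑' n, auxca j (n+1) * x ^ (n+1) / (Nat.factorial (n+1) : ℝ) := by
      rw [← Summable.tsum_sub hsb' hsq']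
      apply tsum_congr
      intro n
      have hstep : auxcb j (n+1) = auxcb j n + auxca j (n+1) := by
        rw [auxcb, auxcb, Finset.sum_range_succ]
      rw [hstep]
      ring
    have hb0 : auxcb j 0 = auxca j 0 := by
      rw [auxcb, Finset.sum_range_one]
    linarith [hT]
  have hkey : Real.exp (-x) * (-1) * (∑' n, auxcq j n * x ^ n / (Nat.factorial n : ℝ))
      + Real.exp (-x) * (∑' n, auxcq j (n+1) * x ^ n / (Nat.factorial n : ℝ)) = pfn j x := by
    rw [pfn_eq, ← hdiff]
    ring
  rw [hkey] at H
  exact H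

lemma auxG_zero (j : ℕ) : auxG j 0 = 0 := by
  rw [auxG]
  have hz : ∀ n : ℕ, auxcq j n * (0:ℝ) ^ n / (Nat.factorial n : ℝ) = 0 := by
    intro n
    cases n with
    | zero => simp [auxcq]
    | succ k => simp
  rw [tsum_congr hz, tsum_zero, mul_zero]

lemma auxG_eq (j : ℕ) (t : ℝ) : auxG j t = t * qfn j t := by
  rw [auxG, qfn]
  have hsq : Summable (fun n => auxcq j n * t ^ n / (Nat.factorial n : ℝ)) :=
    aux_summable_series _ (auxcq_abs j) t
  rw [Summable.tsum_eq_zero_add hsq]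
  simp only [auxcq, zero_mul, zero_div, zero_add]
  have hq : (∑' n, auxcb j n * t ^ (n+1) / (Nat.factorial (n+1) : ℝ))
      = t * ∑' k, t ^ k / (Nat.factorial (k+1) : ℝ) *
          ∑ i ∈ Finset.range (k+1), stirling1 i j / (Nat.factorial i : ℝ) := by
    rw [← tsum_mul_left]
    apply tsum_congr
    intro n
    have hbb : auxcb j n = ∑ i ∈ Finset.range (n+1), stirling1 i j / (Nat.factorial i : ℝ) := by
      rw [auxcb]
      apply Finset.sum_congr rfl
      intro i _
      rw [auxca]
    rw [hbb, pow_succ]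
    ring
  rw [hq]
  ring

/-- The averaging relation `q_j(t) = (1/t)∫_0^t p_j(s) ds` for all `j ≥ 0` and `t > 0`. -/
theorem stmt13 (j : ℕ) (t : ℝ) (ht : 0 < t) :
    qfn j t = (1 / t) * ∫ s in (0:ℝ)..t, pfn j s := by
  have hcont : Continuous (pfn j) := by
    have hfe : pfn j = fun t => Real.exp (-t) *
        ∑' n, auxca j n * t ^ n / (Nat.factorial n : ℝ) := funext (pfn_eq j)
    rw [hfe]
    exact (Real.continuous_exp.comp continuous_neg).mul (aux_continuous_series _ (auxca_abs j))
  have hFTC := intervalIntegral.integral_eq_sub_of_hasDerivAt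
    (f := auxG j) (f' := pfn j) (a := (0:ℝ)) (b := t)
    (fun x _ => auxG_hasDeriv j x) (hcont.intervalIntegrable 0 t)
  rw [auxG_zero, auxG_eq, sub_zero] at hFTC
  rw [hFTC]
  field_simp
end

section
/- For every integer j ≥ 1 and every s > 0, p_j'(s) = (e^{−s}/s)·∫_0^s e^{ξ}·(p_{j−1}(ξ) − p_j(ξ)) dξ. -/
open MeasureTheory ProbabilityTheory Real

open MeasureTheory ProbabilityTheory Real

/-! ### Auxiliary lemmas on Stirling numbers -/

lemma stirling1_rec (k j : ℕ) :
    stirling1 (k+1) (j+1) = k * stirling1 k (j+1) + stirling1 k j := by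
  unfold stirling1
  rw [Finset.prod_range_succ, mul_add, Polynomial.coeff_add, Polynomial.coeff_mul_X,
    Polynomial.coeff_mul_C]
  ring

lemma stirling1_rec0 (k : ℕ) : stirling1 (k+1) 0 = k * stirling1 k 0 := by
  unfold stirling1
  rw [Finset.prod_range_succ, mul_add, Polynomial.coeff_add]
  rw [Polynomial.mul_coeff_zero, Polynomial.coeff_X_zero, Polynomial.coeff_mul_C]
  simp [mul_comm]

lemma stirling1_zero' (j : ℕ) : stirling1 0 j = if j = 0 then 1 else 0 := by
  unfold stirling1
  simp [Polynomial.coeff_one]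

lemma stirling1_nonneg (k j : ℕ) : 0 ≤ stirling1 k j := by
  induction k generalizing j with
  | zero => rw [stirling1_zero']; split <;> norm_num
  | succ k ih =>
    cases j with
    | zero => rw [stirling1_rec0]; exact mul_nonneg (Nat.cast_nonneg k) (ih 0)
    | succ j => rw [stirling1_rec]; exact add_nonneg (mul_nonneg (Nat.cast_nonneg k) (ih (j+1))) (ih j)

lemma stirling1_le (k j : ℕ) : stirling1 k j ≤ (k.factorial : ℝ) := by
  induction k generalizing j with
  | zero => rw [stirling1_zero']; split <;> norm_num
  | succ k ih =>
    rw [Nat.factorial_succ]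
    push_cast
    cases j with
    | zero =>
      rw [stirling1_rec0]
      calc (k : ℝ) * stirling1 k 0 ≤ k * k.factorial := by
            exact mul_le_mul_of_nonneg_left (ih 0) (by positivity)
        _ ≤ (k+1) * k.factorial := by
            have : (0:ℝ) ≤ (k.factorial : ℝ) := by positivity
            nlinarith
    | succ j =>
      rw [stirling1_rec]
      have h1 := ih j
      have h2 := ih (j+1)
      have h3 := stirling1_nonneg k (j+1)
      nlinarith [(Nat.cast_pos (α := ℝ)).mpr (Nat.factorial_pos k)]

/-! ### Generic power-series lemmas -/

lemma summable_series (c : ℕ → ℝ) (hc : ∀ k, |c k| ≤ 1) (t : ℝ) :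
    Summable (fun k : ℕ => t ^ k / (Nat.factorial k : ℝ) * c k) := by
  apply Summable.of_norm
  refine Summable.of_nonneg_of_le (fun k => norm_nonneg _) (fun k => ?_)
    (Real.summable_pow_div_factorial |t|)
  rw [Real.norm_eq_abs, abs_mul, abs_div, abs_pow, Nat.abs_cast]
  calc |t| ^ k / (Nat.factorial k : ℝ) * |c k|
      ≤ |t| ^ k / (Nat.factorial k : ℝ) * 1 := by
        exact mul_le_mul_of_nonneg_left (hc k) (by positivity)
    _ = |t| ^ k / (Nat.factorial k : ℝ) := mul_one _

lemma hasDerivAt_series (c : ℕ → ℝ) (hc : ∀ k, |c k| ≤ 1) (t : ℝ) :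
    HasDerivAt (fun x : ℝ => ∑' k : ℕ, x ^ k / (Nat.factorial k : ℝ) * c k)
      (∑' k : ℕ, t ^ k / (Nat.factorial k : ℝ) * c (k + 1)) t := by
  set R : ℝ := |t| + 1 with hR
  have hR0 : (0:ℝ) < R := by positivity
  set f : ℕ → ℝ → ℝ := fun n x => x ^ n / (Nat.factorial n : ℝ) * c n with hf
  set f' : ℕ → ℝ → ℝ := fun n x => (n * x ^ (n - 1)) * (c n / (Nat.factorial n : ℝ)) with hf'
  set u : ℕ → ℝ := fun n => Nat.casesOn n 0 (fun m => R ^ m / (Nat.factorial m : ℝ)) with hu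
  have hu_sum : Summable u := by
    rw [← summable_nat_add_iff 1]
    exact Real.summable_pow_div_factorial R
  have hderiv : ∀ n : ℕ, ∀ x ∈ Metric.ball (0:ℝ) R, HasDerivAt (f n) (f' n x) x := by
    intro n x _
    have h2 := (hasDerivAt_pow n x).mul_const (c n / (Nat.factorial n : ℝ))
    have hfe : f n = fun y => y ^ n * (c n / (Nat.factorial n : ℝ)) := by
      funext y
      simp only [hf]
      ring
    rw [hfe]
    exact h2
  have hbound : ∀ n : ℕ, ∀ x ∈ Metric.ball (0:ℝ) R, ‖f' n x‖ ≤ u n := by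
    intro n x hx
    have hx' : |x| ≤ R := by
      rw [Metric.mem_ball, Real.dist_eq, sub_zero] at hx
      exact hx.le
    cases n with
    | zero => simp [hf', hu]
    | succ m =>
      simp only [hf', hu, Nat.add_sub_cancel]
      rw [Real.norm_eq_abs, abs_mul, abs_mul, abs_div, abs_pow, Nat.abs_cast, Nat.abs_cast]
      calc ((m+1:ℕ):ℝ) * |x| ^ m * (|c (m+1)| / (Nat.factorial (m+1) : ℝ))
          ≤ ((m+1:ℕ):ℝ) * R ^ m * (1 / (Nat.factorial (m+1) : ℝ)) := by
            gcongr <;> first | exact hx' | exact hc _ | positivity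
        _ = R ^ m / (Nat.factorial m : ℝ) := by
            rw [Nat.factorial_succ]
            have h1 : (0:ℝ) < (Nat.factorial m : ℝ) := by positivity
            push_cast
            field_simp
  have h0 : Summable (fun n => f n 0) := summable_series c hc 0
  have key := hasDerivAt_tsum_of_isPreconnected hu_sum Metric.isOpen_ball
    (convex_ball (0:ℝ) R).isPreconnected hderiv hbound
    (Metric.mem_ball_self hR0) h0
    (by rw [Metric.mem_ball, Real.dist_eq, sub_zero, hR]; exact lt_add_one _ : t ∈ Metric.ball (0:ℝ) R)
  have hsum' : Summable (fun n => f' n t) := by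
    apply Summable.of_norm
    refine Summable.of_nonneg_of_le (fun k => norm_nonneg _) (fun n => hbound n t ?_) hu_sum
    rw [Metric.mem_ball, Real.dist_eq, sub_zero, hR]; exact lt_add_one _
  have hre : ∑' n, f' n t = ∑' k : ℕ, t ^ k / (Nat.factorial k : ℝ) * c (k + 1) := by
    rw [Summable.tsum_eq_zero_add hsum']
    have hz : f' 0 t = 0 := by simp [hf']
    rw [hz, zero_add]
    apply tsum_congr
    intro k
    simp only [hf', Nat.add_sub_cancel, Nat.factorial_succ]
    have h1 : (0:ℝ) < (Nat.factorial k : ℝ) := by positivity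
    push_cast
    field_simp
  rw [← hre]
  exact key

/-! ### The functions `f_j` and their properties -/

noncomputable def ccoef (j k : ℕ) : ℝ := stirling1 k j / (Nat.factorial k : ℝ)

noncomputable def fjfun (j : ℕ) (t : ℝ) : ℝ :=
  ∑' k : ℕ, t ^ k / (Nat.factorial k : ℝ) * ccoef j k

lemma ccoef_nonneg (j k : ℕ) : 0 ≤ ccoef j k :=
  div_nonneg (stirling1_nonneg k j) (Nat.cast_nonneg _)

lemma ccoef_le_one (j k : ℕ) : ccoef j k ≤ 1 := by
  rw [ccoef, div_le_one (by positivity)]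
  exact stirling1_le k j

lemma ccoef_abs (j k : ℕ) : |ccoef j k| ≤ 1 := by
  rw [abs_of_nonneg (ccoef_nonneg j k)]
  exact ccoef_le_one j k

lemma pfn_eq_s14 (j : ℕ) (t : ℝ) : pfn j t = Real.exp (-t) * fjfun j t := rfl

lemma fjfun_hasDerivAt (j : ℕ) (t : ℝ) :
    HasDerivAt (fjfun j) (∑' k : ℕ, t ^ k / (Nat.factorial k : ℝ) * ccoef j (k + 1)) t :=
  hasDerivAt_series (ccoef j) (ccoef_abs j) t

lemma fjfun_cont (j : ℕ) : Continuous (fjfun j) :=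
  continuous_iff_continuousAt.2 fun t => (fjfun_hasDerivAt j t).continuousAt

noncomputable def dcoef (m : ℕ) : ℕ → ℝ :=
  fun n => Nat.casesOn n 0 (fun k => ccoef m k - ccoef (m+1) k)

lemma dcoef_abs (m n : ℕ) : |dcoef m n| ≤ 1 := by
  cases n with
  | zero => simp [dcoef]
  | succ k =>
    have h1 := ccoef_nonneg m k
    have h2 := ccoef_le_one m k
    have h3 := ccoef_nonneg (m+1) k
    have h4 := ccoef_le_one (m+1) k
    rw [abs_le]
    constructor <;> simp only [dcoef] <;> linarith

noncomputable def Gfun (m : ℕ) (t : ℝ) : ℝ :=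
  ∑' n : ℕ, t ^ n / (Nat.factorial n : ℝ) * dcoef m n

lemma Gfun_hasDerivAt (m : ℕ) (x : ℝ) :
    HasDerivAt (Gfun m) (fjfun m x - fjfun (m+1) x) x := by
  have h := hasDerivAt_series (dcoef m) (dcoef_abs m) x
  have he : ∑' k : ℕ, x ^ k / (Nat.factorial k : ℝ) * dcoef m (k + 1)
      = fjfun m x - fjfun (m+1) x := by
    have h1 : (fun k : ℕ => x ^ k / (Nat.factorial k : ℝ) * dcoef m (k + 1))
        = fun k : ℕ => x ^ k / (Nat.factorial k : ℝ) * ccoef m k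
          - x ^ k / (Nat.factorial k : ℝ) * ccoef (m+1) k := by
      funext k
      show x ^ k / (Nat.factorial k : ℝ) * (ccoef m k - ccoef (m+1) k) = _
      ring
    rw [h1, Summable.tsum_sub (summable_series _ (ccoef_abs m) x) (summable_series _ (ccoef_abs (m+1)) x)]
    rfl
  rw [← he]
  exact h

lemma Gfun_zero (m : ℕ) : Gfun m 0 = 0 := by
  have h : ∀ n : ℕ, (0:ℝ) ^ n / (Nat.factorial n : ℝ) * dcoef m n = 0 := by
    intro n
    cases n with
    | zero => simp [dcoef]
    | succ k => simp
  calc Gfun m 0 = ∑' n : ℕ, (0:ℝ) := tsum_congr h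
    _ = 0 := tsum_zero

/-- The derivative formula `p_j'(s) = (e^{-s}/s)∫_0^s e^ξ (p_{j-1}(ξ) - p_j(ξ)) dξ`
for `j ≥ 1` and `s > 0`. -/
theorem stmt14 (j : ℕ) (hj : 1 ≤ j) (s : ℝ) (hs : 0 < s) :
    deriv (pfn j) s =
      (Real.exp (-s) / s) * ∫ ξ in (0:ℝ)..s, Real.exp ξ * (pfn (j - 1) ξ - pfn j ξ) := by
  obtain ⟨m, rfl⟩ : ∃ m, j = m + 1 := ⟨j - 1, (Nat.succ_pred_eq_of_pos hj).symm⟩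
  have hm : m + 1 - 1 = m := rfl
  rw [hm]
  set D : ℝ := ∑' k : ℕ, s ^ k / (Nat.factorial k : ℝ) * ccoef (m+1) (k + 1) with hD
  -- derivative of pfn (m+1)
  have hexp : HasDerivAt (fun t : ℝ => Real.exp (-t)) (Real.exp (-s) * (-1)) s :=
    (hasDerivAt_neg s).exp
  have hp : HasDerivAt (pfn (m+1))
      (Real.exp (-s) * (-1) * fjfun (m+1) s + Real.exp (-s) * D) s := by
    have := hexp.mul (fjfun_hasDerivAt (m+1) s)
    exact this
  rw [hp.deriv]
  -- rewrite the integrand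
  have hint : (∫ ξ in (0:ℝ)..s, Real.exp ξ * (pfn m ξ - pfn (m+1) ξ))
      = ∫ ξ in (0:ℝ)..s, (fjfun m ξ - fjfun (m+1) ξ) := by
    apply intervalIntegral.integral_congr
    intro ξ _
    have h1 : Real.exp ξ * Real.exp (-ξ) = 1 := by
      rw [← Real.exp_add]; simp
    simp only [pfn_eq_s14]
    rw [← mul_sub, ← mul_assoc, h1, one_mul]
  rw [hint]
  -- FTC
  have hftc : (∫ ξ in (0:ℝ)..s, (fjfun m ξ - fjfun (m+1) ξ)) = Gfun m s := by
    rw [intervalIntegral.integral_eq_sub_of_hasDerivAt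
      (fun x _ => Gfun_hasDerivAt m x)
      (((fjfun_cont m).sub (fjfun_cont (m+1))).intervalIntegrable 0 s)]
    rw [Gfun_zero, sub_zero]
  rw [hftc]
  -- key series identity : Gfun m s = s * (D - fjfun (m+1) s)
  have hkey : Gfun m s = s * (D - fjfun (m+1) s) := by
    have hsub : D - fjfun (m+1) s
        = ∑' k : ℕ, (s ^ k / (Nat.factorial k : ℝ) * ccoef (m+1) (k+1)
            - s ^ k / (Nat.factorial k : ℝ) * ccoef (m+1) k) := by
      rw [Summable.tsum_sub (summable_series (fun k => ccoef (m+1) (k+1))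
        (fun k => ccoef_abs (m+1) (k+1)) s) (summable_series _ (ccoef_abs (m+1)) s)]
      rfl
    rw [hsub, ← tsum_mul_left]
    rw [Gfun, Summable.tsum_eq_zero_add (summable_series _ (dcoef_abs m) s)]
    have hz : (s:ℝ) ^ 0 / (Nat.factorial 0 : ℝ) * dcoef m 0 = 0 := by simp [dcoef]
    rw [hz, zero_add]
    apply tsum_congr
    intro k
    show s ^ (k+1) / (Nat.factorial (k+1) : ℝ) * (ccoef m k - ccoef (m+1) k) = _
    have hrec := stirling1_rec k m
    have h1 : (0:ℝ) < (Nat.factorial k : ℝ) := by positivity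
    simp only [ccoef, Nat.factorial_succ, hrec]
    push_cast
    field_simp
    ring
  rw [hkey]
  field_simp
  ring
end
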